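/- Let f : (0,1) → ℝ, q ∈ (1, ∞), and g ∈ L^q(0,1) nonnegative, and suppose that |f(s) − f(t)| ≤ |∫_s^t g(r) dr| for Lebesgue-a.e. pair (s,t) ∈ (0,1)². Then f coincides a.e. with a function in W^{1,q}(0,1) and its weak derivative satisfies |f'| ≤ g a.e. in (0,1). -/

import Mathlib

open MeasureTheory

theorem statement13 (f g : ℝ → ℝ) (q : ℝ) (hq : 1 < q)
    (hg0 : ∀ r : ℝ, 0 ≤ g r)
    (hg : MemLp g (ENNReal.ofReal q) (volume.restrict (Set.Ioo (0:ℝ) 1)))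
    (hfg : ∀ᵐ p ∂((volume : Measure (ℝ × ℝ)).restrict (Set.Ioo (0:ℝ) 1 ×ˢ Set.Ioo (0:ℝ) 1)),
      |f p.1 - f p.2| ≤ |∫ r in p.2..p.1, g r|) :
    ∃ F F' : ℝ → ℝ,
      (∀ᵐ t ∂(volume.restrict (Set.Ioo (0:ℝ) 1)), f t = F t) ∧
      MemLp F' (ENNReal.ofReal q) (volume.restrict (Set.Ioo (0:ℝ) 1)) ∧
      (∀ a ∈ Set.Ioo (0:ℝ) 1, ∀ b ∈ Set.Ioo (0:ℝ) 1, F b - F a = ∫ r in a..b, F' r) ∧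
      (∀ᵐ t ∂(volume.restrict (Set.Ioo (0:ℝ) 1)), |F' t| ≤ g t) := by
  classical
  set I : Set ℝ := Set.Ioo (0:ℝ) 1 with hIdef
  set μI : Measure ℝ := volume.restrict I with hμIdef
  haveI : IsFiniteMeasure μI := ⟨by
    rw [hμIdef, Measure.restrict_apply_univ, hIdef, Real.volume_Ioo]; simp⟩
  have hμI_ne : μI ≠ 0 := by
    rw [hμIdef, ← Measure.measure_univ_ne_zero, Measure.restrict_apply_univ, hIdef,
      Real.volume_Ioo]
    simp
  haveI : (ae μI).NeBot := ae_neBot.mpr hμI_ne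
  -- measurable nonneg version of g
  set g₀ : ℝ → ℝ := hg.aestronglyMeasurable.mk g with hg₀def
  have hg₀m : StronglyMeasurable g₀ := hg.aestronglyMeasurable.stronglyMeasurable_mk
  have hgg₀ : g =ᵐ[μI] g₀ := hg.aestronglyMeasurable.ae_eq_mk
  set gt : ℝ → ℝ := I.indicator (fun x => max (g₀ x) 0) with hgtdef
  have hgt_meas : Measurable gt :=
    (hg₀m.measurable.max measurable_const).indicator measurableSet_Ioo
  have hgt_nonneg : ∀ x, 0 ≤ gt x := fun x =>
    Set.indicator_nonneg (fun y _ => le_max_right _ _) x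
  have hgt_eq : gt =ᵐ[μI] g := by
    filter_upwards [ae_restrict_mem measurableSet_Ioo, hgg₀] with x hx hgx
    rw [hgtdef]
    simp only [Set.indicator_of_mem hx, ← hgx, max_eq_left (hg0 x)]
  have hgi : Integrable g μI := hg.integrable (ENNReal.one_le_ofReal.mpr hq.le)
  have hgt_int : Integrable gt volume := by
    rw [hgtdef, integrable_indicator_iff measurableSet_Ioo]
    exact hgi.congr (hgg₀.mono fun x hx => by
      rw [hx]
      exact (max_eq_left ((hx ▸ hg0 x))).symm)
  -- the primitive G
  set G : ℝ → ℝ := fun x => ∫ t in (0:ℝ)..x, gt t with hGdef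
  have hGcont : Continuous G := hgt_int.continuous_primitive 0
  have hGd : ∀ a b : ℝ, G b - G a = ∫ t in a..b, gt t := by
    intro a b
    rw [hGdef]
    exact intervalIntegral.integral_interval_sub_left hgt_int.intervalIntegrable
      hgt_int.intervalIntegrable
  have hGmono : Monotone G := by
    intro a b hab
    have h1 : (0:ℝ) ≤ ∫ t in a..b, gt t := intervalIntegral.integral_nonneg hab (fun x _ => hgt_nonneg x)
    have h2 := hGd a b
    linarith

  -- transform hfg to G form and Fubini
  have hfg2 : ∀ᵐ s ∂μI, ∀ᵐ t ∂μI, |f s - f t| ≤ |G s - G t| := by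
    have hprod : (volume : Measure (ℝ × ℝ)).restrict (I ×ˢ I) = μI.prod μI := by
      rw [hμIdef, Measure.volume_eq_prod, Measure.prod_restrict]
    rw [hprod] at hfg
    have hmem : ∀ᵐ p ∂(μI.prod μI), p ∈ I ×ˢ I := by
      rw [← hprod]
      exact ae_restrict_mem (measurableSet_Ioo.prod measurableSet_Ioo)
    have key : ∀ᵐ p ∂(μI.prod μI), |f p.1 - f p.2| ≤ |G p.1 - G p.2| := by
      filter_upwards [hfg, hmem] with p hp hpmem
      have h1 : Set.uIoc p.2 p.1 ⊆ I := by
        rw [Set.uIoc, hIdef]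
        rintro x ⟨hx1, hx2⟩
        constructor
        · exact lt_of_lt_of_le (lt_min hpmem.2.1 hpmem.1.1) hx1.le
        · exact lt_of_le_of_lt hx2 (max_lt hpmem.2.2 hpmem.1.2)
      have h2 : (∫ r in p.2..p.1, g r) = ∫ r in p.2..p.1, gt r := by
        apply intervalIntegral.integral_congr_ae
        have h3 : ∀ᵐ x ∂(volume.restrict (Set.uIoc p.2 p.1)), g x = gt x :=
          ae_mono (Measure.restrict_mono h1 le_rfl) hgt_eq.symm
        rw [ae_restrict_iff' measurableSet_uIoc] at h3
        exact h3
      rw [h2, ← hGd p.2 p.1] at hp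
      exact hp
    exact Measure.ae_ae_of_ae_prod key
  set S : Set ℝ := {s | s ∈ I ∧ ∀ᵐ t ∂μI, |f s - f t| ≤ |G s - G t|} with hSdef
  have hS : ∀ᵐ s ∂μI, s ∈ S := by
    filter_upwards [ae_restrict_mem measurableSet_Ioo, hfg2] with s h1 h2
    exact ⟨h1, h2⟩
  obtain ⟨s₀, hs₀⟩ := hS.exists
  -- pairwise Lipschitz on S
  have key : ∀ s₁ ∈ S, ∀ s₂ ∈ S, |f s₁ - f s₂| ≤ |G s₁ - G s₂| := by
    intro s₁ hs₁ s₂ hs₂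
    refine le_of_forall_pos_le_add ?_
    intro ε hε
    set U : Set ℝ := {t : ℝ | |G t - G s₁| < ε/2} with hUdef
    have hUopen : IsOpen U := isOpen_lt ((hGcont.sub continuous_const).abs) continuous_const
    have hs₁U : s₁ ∈ U := by simp [hUdef]; linarith
    have hpos : volume (U ∩ I) ≠ 0 :=
      ((hUopen.inter isOpen_Ioo).measure_pos volume ⟨s₁, hs₁U, hs₁.1⟩).ne'
    haveI : (ae (volume.restrict (U ∩ I))).NeBot := by
      refine ae_neBot.mpr ?_
      rw [← Measure.measure_univ_ne_zero, Measure.restrict_apply_univ]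
      exact hpos
    have h1 : ∀ᵐ t ∂(volume.restrict (U ∩ I)),
        (|f s₁ - f t| ≤ |G s₁ - G t| ∧ |f s₂ - f t| ≤ |G s₂ - G t|) ∧ t ∈ U ∩ I := by
      refine Filter.Eventually.and ?_
        (ae_restrict_mem (hUopen.measurableSet.inter measurableSet_Ioo))
      exact ae_mono (Measure.restrict_mono Set.inter_subset_right le_rfl) (hs₁.2.and hs₂.2)
    obtain ⟨t, ⟨ht1, ht2⟩, htU, _⟩ := h1.exists
    have e1 : |f s₁ - f s₂| ≤ |f s₁ - f t| + |f t - f s₂| := abs_sub_le _ _ _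
    have e2 : |f t - f s₂| = |f s₂ - f t| := abs_sub_comm _ _
    have e3 : |G s₁ - G t| = |G t - G s₁| := abs_sub_comm _ _
    have e4 : |G t - G s₂| ≤ |G t - G s₁| + |G s₁ - G s₂| := abs_sub_le _ _ _
    have e5 : |G s₂ - G t| = |G t - G s₂| := abs_sub_comm _ _
    have hU' : |G t - G s₁| < ε/2 := htU
    linarith

  -- the Lipschitz extension F
  set F : ℝ → ℝ := fun t => sInf ((fun s => f s + |G t - G s|) '' S) with hFdef
  have hbdd : ∀ t : ℝ, ∀ s ∈ S, f s₀ - |G t - G s₀| ≤ f s + |G t - G s| := by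
    intro t s hsS
    have h1 : |f s - f s₀| ≤ |G s - G s₀| := key _ hsS _ hs₀
    have h2 : |G s - G s₀| ≤ |G s - G t| + |G t - G s₀| := abs_sub_le _ _ _
    have h3 := abs_le.1 h1
    have h4 : |G s - G t| = |G t - G s| := abs_sub_comm _ _
    linarith [h3.1, h3.2]
  have hBdd : ∀ t : ℝ, BddBelow ((fun s => f s + |G t - G s|) '' S) := by
    intro t
    refine ⟨f s₀ - |G t - G s₀|, ?_⟩
    rintro y ⟨s, hsS, rfl⟩
    exact hbdd t s hsS
  have hne : ∀ t : ℝ, ((fun s => f s + |G t - G s|) '' S).Nonempty :=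
    fun t => ⟨_, s₀, hs₀, rfl⟩
  have hFle : ∀ t : ℝ, ∀ s ∈ S, F t ≤ f s + |G t - G s| := by
    intro t s hsS
    exact csInf_le (hBdd t) ⟨s, hsS, rfl⟩
  have hFeq : ∀ s ∈ S, F s = f s := by
    intro s hsS
    apply le_antisymm
    · have := hFle s s hsS
      simpa using this
    · apply le_csInf (hne s)
      rintro y ⟨s', hs', rfl⟩
      have h1 := abs_le.1 (key s hsS s' hs')
      dsimp only
      linarith [h1.2]
  have hFLip : ∀ t₁ t₂ : ℝ, |F t₁ - F t₂| ≤ |G t₁ - G t₂| := by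
    have main : ∀ t₁ t₂ : ℝ, F t₁ ≤ F t₂ + |G t₁ - G t₂| := by
      intro t₁ t₂
      have h : F t₁ - |G t₁ - G t₂| ≤ F t₂ := by
        apply le_csInf (hne t₂)
        rintro y ⟨s, hsS, rfl⟩
        have h1 := hFle t₁ s hsS
        have h2 : |G t₁ - G s| ≤ |G t₁ - G t₂| + |G t₂ - G s| := abs_sub_le _ _ _
        dsimp only
        linarith
      linarith
    intro t₁ t₂
    rw [abs_sub_le_iff]
    constructor
    · linarith [main t₁ t₂, abs_nonneg (G t₁ - G t₂)]
    · have := main t₂ t₁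
      rw [abs_sub_comm] at this
      linarith
  have hFcont : Continuous F := by
    rw [continuous_iff_continuousAt]
    intro b
    rw [ContinuousAt, tendsto_iff_dist_tendsto_zero]
    apply squeeze_zero (fun x => dist_nonneg)
      (g := fun x => dist (G x) (G b))
      (fun x => by simpa [Real.dist_eq] using hFLip x b)
    have h := (hGcont.tendsto b).dist (tendsto_const_nhds (x := G b))
    simpa using h
  have hmonoH : Monotone (fun x => G x + F x) := by
    intro a b hab
    have h1 := (abs_sub_le_iff.1 (hFLip a b)).1
    have h2 : |G a - G b| = G b - G a := by
      rw [abs_sub_comm]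
      exact abs_of_nonneg (by linarith [hGmono hab])
    simp only []
    linarith
  have hmonoK : Monotone (fun x => G x - F x) := by
    intro a b hab
    have h1 := (abs_sub_le_iff.1 (hFLip b a)).1
    have h2 : |G b - G a| = G b - G a := abs_of_nonneg (by linarith [hGmono hab])
    simp only []
    linarith

  -- Stieltjes functions for G + F and G - F
  set sH : StieltjesFunction ℝ :=
    ⟨fun x => G x + F x, hmonoH, fun x => ((hGcont.add hFcont).continuousAt).continuousWithinAt⟩
    with hsHdef
  set sK : StieltjesFunction ℝ :=
    ⟨fun x => G x - F x, hmonoK, fun x => ((hGcont.sub hFcont).continuousAt).continuousWithinAt⟩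
    with hsKdef
  set ν : Measure ℝ := volume.withDensity (fun x => ENNReal.ofReal (gt x)) with hνdef
  have hν : ∀ a b : ℝ, a < b → ν (Set.Ioc a b) = ENNReal.ofReal (G b - G a) := by
    intro a b hab
    rw [hνdef, withDensity_apply _ measurableSet_Ioc,
      ← ofReal_integral_eq_lintegral_ofReal (hgt_int.integrableOn)
        (Filter.Eventually.of_forall (fun x => hgt_nonneg x))]
    congr 1
    rw [hGd a b, intervalIntegral.integral_of_le hab.le]
  have hext : sH.measure + sK.measure = ν + ν := by
    refine Measure.ext_of_Ioc' _ _ (fun a b hab => ?_) fun a b hab => ?_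
    · rw [Measure.add_apply, sH.measure_Ioc, sK.measure_Ioc]
      exact (ENNReal.add_lt_top.mpr ⟨ENNReal.ofReal_lt_top, ENNReal.ofReal_lt_top⟩).ne
    rw [Measure.add_apply, Measure.add_apply, sH.measure_Ioc, sK.measure_Ioc, hν a b hab]
    have e1 : sH b - sH a = (G b + F b) - (G a + F a) := rfl
    have e2 : sK b - sK a = (G b - F b) - (G a - F a) := rfl
    rw [e1, e2]
    have n1 : (0:ℝ) ≤ (G b + F b) - (G a + F a) := by linarith [hmonoH hab.le]
    have n2 : (0:ℝ) ≤ (G b - F b) - (G a - F a) := by linarith [hmonoK hab.le]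
    have n3 : (0:ℝ) ≤ G b - G a := by linarith [hGmono hab.le]
    rw [← ENNReal.ofReal_add n1 n2, ← ENNReal.ofReal_add n3 n3]
    congr 1
    ring
  have hac : sH.measure ≪ volume := by
    have h1 : sH.measure ≤ ν + ν := by
      rw [← hext]
      exact Measure.le_add_right le_rfl
    have h2 : ν + ν ≪ volume := by
      intro s hs
      have h3 := withDensity_absolutelyContinuous (volume : Measure ℝ)
        (fun x => ENNReal.ofReal (gt x)) hs
      rw [Measure.add_apply]
      simp [hνdef, h3]
    exact (Measure.absolutelyContinuous_of_le h1).trans h2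
  set ρ : ℝ → ENNReal := sH.measure.rnDeriv volume with hρdef
  have hρ_meas : Measurable ρ := Measure.measurable_rnDeriv _ _
  have hρ_lt_top : ∀ᵐ x ∂(volume : Measure ℝ), ρ x < ⊤ := Measure.rnDeriv_lt_top _ _
  have hρ_le : ∀ᵐ x ∂(volume : Measure ℝ),
      ρ x ≤ ENNReal.ofReal (gt x) + ENNReal.ofReal (gt x) := by
    have h1 := Measure.rnDeriv_add' sH.measure sK.measure volume
    have h2 : (sH.measure + sK.measure).rnDeriv volume
        =ᵐ[volume] fun x => ENNReal.ofReal (gt x) + ENNReal.ofReal (gt x) := by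
      rw [hext]
      have e : ν + ν = volume.withDensity
          (fun x => ENNReal.ofReal (gt x) + ENNReal.ofReal (gt x)) := by
        rw [hνdef, ← withDensity_add_left (hgt_meas.ennreal_ofReal)]
        rfl
      rw [e]
      exact Measure.rnDeriv_withDensity volume
        (hgt_meas.ennreal_ofReal.add hgt_meas.ennreal_ofReal)
    filter_upwards [h1, h2] with x hx1 hx2
    calc ρ x ≤ ρ x + sK.measure.rnDeriv volume x := le_self_add
      _ = (sH.measure + sK.measure).rnDeriv volume x := hx1.symm
      _ = ENNReal.ofReal (gt x) + ENNReal.ofReal (gt x) := hx2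
  set F' : ℝ → ℝ := fun x => (ρ x).toReal - gt x with hF'def
  have habs : ∀ᵐ x ∂(volume : Measure ℝ), |F' x| ≤ gt x := by
    filter_upwards [hρ_le, hρ_lt_top] with x h1 h2
    have h3 : (ρ x).toReal ≤ 2 * gt x := by
      have h4 : ρ x ≤ ENNReal.ofReal (2 * gt x) := by
        rwa [two_mul, ENNReal.ofReal_add (hgt_nonneg x) (hgt_nonneg x)]
      calc (ρ x).toReal ≤ (ENNReal.ofReal (2 * gt x)).toReal :=
            ENNReal.toReal_mono ENNReal.ofReal_ne_top h4
        _ = 2 * gt x := ENNReal.toReal_ofReal (by linarith [hgt_nonneg x])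
    rw [hF'def, abs_le]
    constructor
    · simp only []
      linarith [ENNReal.toReal_nonneg (a := ρ x)]
    · simp only []
      linarith

  have hHIoc : ∀ a b : ℝ, sH.measure (Set.Ioc a b) = ∫⁻ x in Set.Ioc a b, ρ x := by
    intro a b
    conv_lhs => rw [← Measure.withDensity_rnDeriv_eq sH.measure volume hac]
    rw [withDensity_apply _ measurableSet_Ioc]
  have hρ_int : ∀ a b : ℝ, IntegrableOn (fun x => (ρ x).toReal) (Set.Ioc a b) volume := by
    intro a b
    refine integrable_toReal_of_lintegral_ne_top hρ_meas.aemeasurable.restrict ?_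
    rw [← hHIoc a b, sH.measure_Ioc]
    exact ENNReal.ofReal_ne_top
  have hFTC : ∀ a b : ℝ, a ≤ b → F b - F a = ∫ x in Set.Ioc a b, F' x := by
    intro a b hab
    have e1 : (∫ x in Set.Ioc a b, (ρ x).toReal) = (G b + F b) - (G a + F a) := by
      rw [integral_toReal hρ_meas.aemeasurable.restrict (ae_restrict_of_ae hρ_lt_top)]
      have e0 : (∫⁻ x in Set.Ioc a b, ρ x) = ENNReal.ofReal ((G b + F b) - (G a + F a)) := by
        rw [← hHIoc a b]
        exact sH.measure_Ioc a b
      rw [e0, ENNReal.toReal_ofReal (by have hm : G a + F a ≤ G b + F b := hmonoH hab; linarith)]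
    have e2 : (∫ x in Set.Ioc a b, gt x) = G b - G a := by
      rw [hGd a b, intervalIntegral.integral_of_le hab]
    have e3 : ∫ x in Set.Ioc a b, F' x
        = (∫ x in Set.Ioc a b, (ρ x).toReal) - ∫ x in Set.Ioc a b, gt x :=
      integral_sub (hρ_int a b) hgt_int.integrableOn
    rw [e3, e1, e2]
    ring
  refine ⟨F, F', ?_, ?_, ?_, ?_⟩
  · exact hS.mono fun s hs => (hFeq s hs).symm
  · refine MemLp.of_le hg (hρ_meas.ennreal_toReal.sub hgt_meas).aestronglyMeasurable ?_
    filter_upwards [ae_restrict_of_ae habs, hgt_eq] with x h1 h2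
    rw [Real.norm_eq_abs, Real.norm_eq_abs, abs_of_nonneg (hg0 x)]
    rw [h2] at h1
    exact h1
  · intro a _ b _
    rcases le_total a b with h | h
    · rw [intervalIntegral.integral_of_le h]
      exact hFTC a b h
    · rw [intervalIntegral.integral_symm, intervalIntegral.integral_of_le h]
      have := hFTC b a h
      linarith
  · filter_upwards [ae_restrict_of_ae habs, hgt_eq] with t h1 h2
    rw [← h2]
    exact h1
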